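/- Let E be a real inner product space, W ⊆ E a complete (e.g. finite-dimensional) subspace, and P : E → E the orthogonal projection onto W. Fix α ∈ E with P(α) ≠ 0. Then for z ∈ E the following are equivalent: (i) z ∈ W and ⟪z, α⟫ ≤ 0; (ii) there exist x ∈ W and μ ∈ ℝ with μ ≥ 0 such that z = x − ((⟪x, P(α)⟫ + μ)/⟪P(α), P(α)⟫) • P(α). -/

import Mathlib

open scoped RealInnerProductSpace

lemma inner_eq_inner_proj
    (E : Type*) [NormedAddCommGroup E] [InnerProductSpace ℝ E]
    (W : Submodule ℝ E) [CompleteSpace W] (α w : E) (hw : w ∈ W) :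
    ⟪w, α⟫ = ⟪w, (W.orthogonalProjection α : E)⟫ := by
  have h : ⟪α - (W.orthogonalProjection α : E), w⟫ = 0 :=
    Submodule.starProjection_inner_eq_zero α w hw
  have h' : ⟪w, α - (W.orthogonalProjection α : E)⟫ = 0 := by
    rw [real_inner_comm]; exact h
  rw [inner_sub_right] at h'
  linarith

/-- pointwise content of Proposition 11, 'stepsiii': for the orthogonal
projection `P` onto a complete subspace `W` of a real inner product space and a point
`α` with `P α ≠ 0`, a vector `z` lies in `W` with `⟪z, α⟫ ≤ 0` if and only if it is
given by formula (cif): `z = x − ((⟪x, Pα⟫ + μ)/⟪Pα, Pα⟫) • Pα` for some `x ∈ W` and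
some `μ ≥ 0`. -/
theorem dissipative_force_characterization
    (E : Type*) [NormedAddCommGroup E] [InnerProductSpace ℝ E]
    (W : Submodule ℝ E) [CompleteSpace W]
    (P : E → E) (hP : ∀ x : E, P x = (W.orthogonalProjection x : E))
    (α : E) (hα : P α ≠ 0) (z : E) :
    (z ∈ W ∧ ⟪z, α⟫ ≤ 0) ↔
      (∃ x ∈ W, ∃ μ : ℝ, 0 ≤ μ ∧
        z = x - ((⟪x, P α⟫ + μ) / ⟪P α, P α⟫) • P α) := by
  have hPαW : P α ∈ W := by rw [hP]; exact (W.orthogonalProjection α).2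
  have hc : ⟪P α, P α⟫ ≠ 0 := by
    simpa using (inner_self_ne_zero (𝕜 := ℝ)).mpr hα
  have key : ∀ w ∈ W, ⟪w, α⟫ = ⟪w, P α⟫ := fun w hw => by
    rw [hP]; exact inner_eq_inner_proj E W α w hw
  constructor
  · rintro ⟨hzW, hz⟩
    refine ⟨z, hzW, -⟪z, P α⟫, ?_, ?_⟩
    · have := key z hzW; linarith
    · simp
  · rintro ⟨x, hxW, μ, hμ, rfl⟩
    constructor
    · exact W.sub_mem hxW (W.smul_mem _ hPαW)
    · have hmem : x - ((⟪x, P α⟫ + μ) / ⟪P α, P α⟫) • P α ∈ W :=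
        W.sub_mem hxW (W.smul_mem _ hPαW)
      rw [key _ hmem, inner_sub_left, real_inner_smul_left,
        div_mul_cancel₀ _ hc]
      linarith
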